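/- Let I be a set containing at least two elements and let (A_i)_{i∈I} be a family of commutative unitary rings such that at least two of the rings A_i (for two distinct indices) have characteristic zero. Then for every integer n ≥ 3 there exists an irreducible λ-quiddity of size n over the product ring ∏_{i∈I} A_i. -/

import Mathlib

/-- The matrix `[[a, -1], [1, 0]]`. -/
def mMat {A : Type*} [CommRing A] (a : A) : Matrix (Fin 2) (Fin 2) A := !![a, -1; 1, 0]

/-- `M_n(a₁, …, aₙ) = mMat aₙ * ⋯ * mMat a₁`, for the tuple given as a list `[a₁, …, aₙ]`. -/
def mProd {A : Type*} [CommRing A] (l : List A) : Matrix (Fin 2) (Fin 2) A :=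
  ((l.map mMat).reverse).prod

/-- The sum `(a₁,…,aₙ) ⊕ (b₁,…,b_m) = (a₁+b_m, a₂,…,a_{n−1}, aₙ+b₁, b₂,…,b_{m−1})`. -/
def oplus {A : Type*} [CommRing A] (a b : List A) : List A :=
  (a.headD 0 + b.getLastD 0) ::
    (a.dropLast.tail ++ (a.getLastD 0 + b.headD 0) :: b.dropLast.tail)

/-- Two tuples are equivalent if one is a cyclic rotation of the other or of its reversal. -/
def TupEquiv {A : Type*} (a b : List A) : Prop :=
  (∃ k, b = a.rotate k) ∨ (∃ k, b = a.reverse.rotate k)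

/-- A λ-quiddity over `R ⊆ A`: all entries lie in `R` and `M_n(a₁,…,aₙ) = ± Id`. -/
def IsQuiddity {A : Type*} [CommRing A] (R : Set A) (c : List A) : Prop :=
  (∀ x ∈ c, x ∈ R) ∧ (mProd c = 1 ∨ mProd c = -1)

/-- A λ-quiddity `c` over `R` is reducible if `c ∼ a ⊕ b` with `a ∈ R^m`, `m ≥ 3`,
and `b` a λ-quiddity over `R` of size `l ≥ 3`. -/
def IsReducible {A : Type*} [CommRing A] (R : Set A) (c : List A) : Prop :=
  ∃ a b : List A, 3 ≤ a.length ∧ 3 ≤ b.length ∧ (∀ x ∈ a, x ∈ R) ∧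
    IsQuiddity R b ∧ TupEquiv c (oplus a b)

/-- An irreducible λ-quiddity over `R`: a λ-quiddity of size `≥ 3` which is not reducible. -/
def IrreducibleQuiddity {A : Type*} [CommRing A] (R : Set A) (c : List A) : Prop :=
  IsQuiddity R c ∧ 3 ≤ c.length ∧ ¬ IsReducible R c

/-- The continuant `K_i(a₁,…,a_i)`, determinant of the tridiagonal matrix with diagonal
`a₁,…,a_i` and off-diagonal entries `1`; `K₀ = 1`. -/
def cont {A : Type*} [CommRing A] : List A → A
  | [] => 1
  | [a] => a
  | a :: b :: l => a * cont (b :: l) - cont l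

section Basic
variable {A : Type*} [CommRing A] {B : Type*} [CommRing B]

@[simp] lemma mProd_nil : mProd ([] : List A) = 1 := rfl

@[simp] lemma mProd_cons (x : A) (l : List A) : mProd (x :: l) = mProd l * mMat x := by
  simp [mProd]

lemma mProd_append (s t : List A) : mProd (s ++ t) = mProd t * mProd s := by
  simp [mProd, List.reverse_append]

@[simp] lemma mProd_singleton (x : A) : mProd [x] = mMat x := by
  simp [mProd]

@[simp] lemma cont_nil : cont ([] : List A) = 1 := rfl
@[simp] lemma cont_singleton (x : A) : cont [x] = x := rfl
lemma cont_cons₂ (x y : A) (l : List A) :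
    cont (x :: y :: l) = x * cont (y :: l) - cont l := rfl

lemma mProd_entries (l : List A) :
    mProd l 0 0 = cont l ∧ mProd l 0 1 = (if l.isEmpty then 0 else -cont l.tail) := by
  induction l with
  | nil => simp [Matrix.one_apply]
  | cons x l ih =>
    obtain ⟨h00, h01⟩ := ih
    have e0 : mProd (x :: l) 0 0 = mProd l 0 0 * x + mProd l 0 1 := by
      simp [mProd_cons, Matrix.mul_apply, Fin.sum_univ_two, mMat]
    have e1 : mProd (x :: l) 0 1 = -(mProd l 0 0) := by
      simp [mProd_cons, Matrix.mul_apply, Fin.sum_univ_two, mMat]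
    constructor
    · rw [e0, h00, h01]
      cases l with
      | nil => simp
      | cons y t => simp [cont_cons₂]; ring
    · rw [e1, h00]; simp

lemma cont_eq_mProd (l : List A) : cont l = mProd l 0 0 := (mProd_entries l).1.symm

lemma mapMatrix_mMat (φ : A →+* B) (x : A) : φ.mapMatrix (mMat x) = mMat (φ x) := by
  ext i j
  fin_cases i <;> fin_cases j <;> simp [mMat]

lemma mProd_map (φ : A →+* B) (l : List A) : mProd (l.map φ) = φ.mapMatrix (mProd l) := by
  have h : (l.map ⇑φ).map mMat = (l.map mMat).map ⇑φ.mapMatrix := by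
    rw [List.map_map, List.map_map]
    apply List.map_congr_left
    intro x _
    simp only [Function.comp_apply]
    exact (mapMatrix_mMat φ x).symm
  unfold mProd
  rw [map_list_prod]
  simp only [List.map_reverse]
  rw [h]

lemma cont_map (φ : A →+* B) (l : List A) : cont (l.map φ) = φ (cont l) := by
  rw [cont_eq_mProd, mProd_map]
  simp [cont_eq_mProd]

end Basic
section Rev
open Matrix
variable {A : Type*} [CommRing A]

lemma transpose_fin_two' {A : Type*} [CommRing A] (a b c d : A) :
    (!![a, b; c, d])ᵀ = !![a, c; b, d] := by
  ext i j
  fin_cases i <;> fin_cases j <;> simp [Matrix.transpose_apply]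

def dMat {A : Type*} [CommRing A] : Matrix (Fin 2) (Fin 2) A := !![1, 0; 0, -1]

lemma dMat_sq : (dMat : Matrix (Fin 2) (Fin 2) A) * dMat = 1 := by
  rw [dMat, Matrix.mul_fin_two, Matrix.one_fin_two]
  norm_num

lemma mMat_dMat (x : A) : mMat x * dMat = dMat * (mMat x)ᵀ := by
  rw [mMat, dMat, transpose_fin_two', Matrix.mul_fin_two, Matrix.mul_fin_two]
  ext i j
  fin_cases i <;> fin_cases j <;> simp <;> ring

lemma prod_map_mMat_dMat (l : List A) :
    (l.map mMat).prod * dMat = dMat * (mProd l)ᵀ := by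
  induction l with
  | nil => simp [mProd]
  | cons x l ih =>
    rw [List.map_cons, List.prod_cons, mProd_cons, Matrix.transpose_mul,
      Matrix.mul_assoc, ih, ← Matrix.mul_assoc, mMat_dMat, Matrix.mul_assoc]

lemma cont_reverse (l : List A) : cont l.reverse = cont l := by
  have h1 : mProd l.reverse = (l.map mMat).prod := by
    unfold mProd
    rw [List.map_reverse, List.reverse_reverse]
  have h2 : (l.map mMat).prod = dMat * (mProd l)ᵀ * dMat := by
    calc (l.map mMat).prod = (l.map mMat).prod * (dMat * dMat) := by rw [dMat_sq, mul_one]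
      _ = ((l.map mMat).prod * dMat) * dMat := by rw [Matrix.mul_assoc]
      _ = dMat * (mProd l)ᵀ * dMat := by rw [prod_map_mMat_dMat]
  rw [cont_eq_mProd, h1, h2, cont_eq_mProd]
  rw [Matrix.eta_fin_two (mProd l), transpose_fin_two', dMat, Matrix.mul_fin_two,
    Matrix.mul_fin_two]
  simp

end Rev
section Windows
variable {α : Type*}

lemma drop_eq_rotate_take (l : List α) (m : ℕ) (hm : m ≤ l.length) :
    l.drop m = (l.rotate m).take (l.length - m) := by
  rw [List.rotate_eq_drop_append_take hm]
  exact (List.take_left' (by simp [hm])).symm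

lemma rotdrop_eq_rotate_take (l : List α) (k m : ℕ) (hm : m ≤ l.length) :
    (l.rotate k).drop m = (l.rotate (k + m)).take (l.length - m) := by
  rw [← List.rotate_rotate]
  have := drop_eq_rotate_take (l.rotate k) m (by simpa using hm)
  simpa using this

lemma reverse_rotate_eq (l : List α) (j : ℕ) (hj : j ≤ l.length) :
    l.reverse.rotate j = (l.rotate (l.length - j)).reverse := by
  rw [List.rotate_eq_drop_append_take (Nat.sub_le _ _), List.reverse_append,
    List.reverse_take, List.reverse_drop,
    List.rotate_eq_drop_append_take (by simpa using hj)]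
  have h1 : l.length - (l.length - j) = j := by omega
  rw [h1]

lemma rev_window (l : List α) (j L : ℕ) (hL : L ≤ l.length) :
    ∃ j', (l.reverse.rotate j).take L = ((l.rotate j').take L).reverse := by
  set n := l.length with hn
  rcases Nat.eq_zero_or_pos n with h0 | hpos
  · refine ⟨0, ?_⟩
    have : l = [] := List.length_eq_zero_iff.mp (by omega)
    simp [this]
  have hmod : l.reverse.rotate j = l.reverse.rotate (j % n) := by
    rw [← List.rotate_mod]
    congr 1
    simp [hn]
  have hj' : j % n ≤ n := le_of_lt (Nat.mod_lt _ hpos)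
  rw [hmod, reverse_rotate_eq l _ (by omega)]
  set i := n - j % n with hi
  have hlen : (l.rotate i).length = n := by simp [hn]
  refine ⟨i + (n - L), ?_⟩
  calc ((l.rotate i).reverse).take L
      = ((l.rotate i).drop (n - L)).reverse := by
        rw [List.reverse_drop, hlen, Nat.sub_sub_self hL]
    _ = (((l.rotate i).rotate (n - L)).take ((l.rotate i).length - (n - L))).reverse := by
        rw [← drop_eq_rotate_take _ _ (by omega)]
    _ = ((l.rotate (i + (n - L))).take L).reverse := by
        rw [List.rotate_rotate, hlen, Nat.sub_sub_self hL]
end Windows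
section ZCont

/-- Master lemma for continuants of `(-2)`-runs followed by anything. -/
lemma cont_rep (p : ℕ) : ∀ (x : ℤ) (l : List ℤ),
    cont (List.replicate p (-2 : ℤ) ++ x :: l)
      = (-1) ^ p * ((p + 1 : ℤ) * cont (x :: l) + (p : ℤ) * cont l) := by
  induction p using Nat.twoStepInduction with
  | zero => intro x l; simp
  | one =>
    intro x l
    have : List.replicate 1 (-2 : ℤ) ++ x :: l = -2 :: x :: l := rfl
    rw [this, cont_cons₂]
    push_cast
    ring
  | more p ih1 ih2 =>
    intro x l
    have e1 : List.replicate (p + 2) (-2 : ℤ) ++ x :: l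
        = -2 :: -2 :: (List.replicate p (-2 : ℤ) ++ x :: l) := by
      simp [List.replicate_succ]
    have e2 : -2 :: (List.replicate p (-2 : ℤ) ++ x :: l)
        = List.replicate (p + 1) (-2 : ℤ) ++ x :: l := by
      simp [List.replicate_succ]
    rw [e1, cont_cons₂, e2, ih2, ih1]
    push_cast
    ring

lemma cont_rep_run (k : ℕ) :
    cont (List.replicate k (-2 : ℤ)) = (-1) ^ k * (k + 1 : ℤ) := by
  cases k with
  | zero => simp
  | succ p =>
    have : List.replicate (p + 1) (-2 : ℤ) = List.replicate p (-2 : ℤ) ++ [-2] := by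
      rw [← List.replicate_succ']
    rw [this, show ([-2] : List ℤ) = (-2 : ℤ) :: [] from rfl, cont_rep]
    push_cast
    simp
    ring

lemma cont_rep_one (p : ℕ) :
    cont (List.replicate p (-2 : ℤ) ++ [-1]) = (-1) ^ (p + 1) := by
  rw [show ([-1] : List ℤ) = (-1 : ℤ) :: [] from rfl, cont_rep]
  simp
  ring

lemma cont_one_rep (b : ℕ) :
    cont (-1 :: List.replicate b (-2 : ℤ)) = (-1) ^ (b + 1) := by
  cases b with
  | zero => simp
  | succ c =>
    have e1 : List.replicate (c + 1) (-2 : ℤ) = -2 :: List.replicate c (-2 : ℤ) := by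
      simp [List.replicate_succ]
    rw [e1, cont_cons₂, ← e1, cont_rep_run, cont_rep_run]
    push_cast
    ring

lemma cont_t_one_rep (m b : ℕ) :
    cont (-(m + 1 : ℤ) :: -1 :: List.replicate b (-2 : ℤ))
      = (-1) ^ b * ((m : ℤ) - b) := by
  rw [cont_cons₂, cont_one_rep, cont_rep_run]
  push_cast
  ring

lemma cont_rep_one_t (m p : ℕ) :
    cont (List.replicate p (-2 : ℤ) ++ [-1, -(m + 1 : ℤ)])
      = (-1) ^ p * ((m : ℤ) - p) := by
  rw [show ([-1, -(m + 1 : ℤ)] : List ℤ) = (-1 : ℤ) :: [-(m + 1 : ℤ)] from rfl, cont_rep]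
  rw [cont_cons₂]
  simp
  ring

lemma cont_full (m p q : ℕ) :
    cont (List.replicate p (-2 : ℤ) ++ [-1, -(m + 1 : ℤ), -1] ++ List.replicate q (-2 : ℤ))
      = (-1) ^ (p + q) * ((p : ℤ) + q + 1 - m) := by
  have e1 : List.replicate p (-2 : ℤ) ++ [-1, -(m + 1 : ℤ), -1] ++ List.replicate q (-2 : ℤ)
      = List.replicate p (-2 : ℤ)
        ++ (-1 : ℤ) :: (-(m + 1 : ℤ) :: -1 :: List.replicate q (-2 : ℤ)) := by
    simp
  rw [e1, cont_rep, cont_cons₂, cont_t_one_rep, cont_one_rep]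
  push_cast
  ring

end ZCont
section ZQuiddity

/-- First coordinate: `(-2)^m ++ [-1, -(m+1), -1]`. -/
def uInt (m : ℕ) : List ℤ := List.replicate m (-2) ++ [-1, -(m + 1 : ℤ), -1]

/-- Second coordinate: `[-1] ++ (-2)^m ++ [-1, -(m+1)]`. -/
def vInt (m : ℕ) : List ℤ := -1 :: (List.replicate m (-2) ++ [-1, -(m + 1 : ℤ)])

@[simp] lemma uInt_length (m : ℕ) : (uInt m).length = m + 3 := by simp [uInt]
@[simp] lemma vInt_length (m : ℕ) : (vInt m).length = m + 3 := by simp [vInt]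

lemma mprod_replicate (p : ℕ) :
    mProd (List.replicate p (-2 : ℤ))
      = (-1 : ℤ) ^ p • !![(p : ℤ) + 1, (p : ℤ); -(p : ℤ), 1 - (p : ℤ)] := by
  induction p with
  | zero =>
    simp [Matrix.one_fin_two]
  | succ p ih =>
    have e1 : List.replicate (p + 1) (-2 : ℤ) = (-2 : ℤ) :: List.replicate p (-2 : ℤ) := by
      simp [List.replicate_succ]
    rw [e1, mProd_cons, ih]
    ext i j
    fin_cases i <;> fin_cases j <;>
      simp [Matrix.mul_apply, Fin.sum_univ_two, mMat, Matrix.smul_apply, pow_succ] <;>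
      push_cast <;> ring

lemma mprod_uInt (m : ℕ) : mProd (uInt m) = (-1 : ℤ) ^ m • 1 := by
  rw [uInt, mProd_append, mprod_replicate]
  have e2 : mProd [(-1 : ℤ), -(m + 1 : ℤ), -1]
      = mMat (-1) * (mMat (-(m + 1 : ℤ)) * mMat (-1)) := by
    simp [mProd, Matrix.mul_assoc]
  rw [e2]
  ext i j
  fin_cases i <;> fin_cases j <;>
    simp [Matrix.mul_apply, Fin.sum_univ_two, mMat, Matrix.smul_apply, Matrix.one_apply] <;>
    push_cast <;> ring

lemma mprod_vInt (m : ℕ) : mProd (vInt m) = (-1 : ℤ) ^ m • 1 := by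
  rw [vInt, mProd_cons, mProd_append, mprod_replicate]
  have e2 : mProd [(-1 : ℤ), -(m + 1 : ℤ)] = mMat (-(m + 1 : ℤ)) * mMat (-1) := by
    simp [mProd]
  rw [e2]
  ext i j
  fin_cases i <;> fin_cases j <;>
    simp [Matrix.mul_apply, Fin.sum_univ_two, mMat, Matrix.smul_apply, Matrix.one_apply] <;>
    push_cast <;> ring

end ZQuiddity
section Key

lemma abs_m1pow (k : ℕ) (z : ℤ) : |(-1 : ℤ) ^ k * z| = |z| := by
  rw [abs_mul, abs_pow, abs_neg, abs_one, one_pow, one_mul]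

lemma rotU_le (m j : ℕ) (hj : j ≤ m) :
    (uInt m).rotate j
      = List.replicate (m - j) (-2 : ℤ)
          ++ ([-1, -(m + 1 : ℤ), -1] ++ List.replicate j (-2)) := by
  rw [List.rotate_eq_drop_append_take (by simp; omega), uInt,
    List.drop_append, List.take_append]
  rw [List.drop_replicate, List.take_replicate, List.length_replicate,
    Nat.sub_eq_zero_of_le hj, Nat.min_eq_left hj]
  simp

lemma rotU_m1 (m : ℕ) :
    (uInt m).rotate (m + 1)
      = -(m + 1 : ℤ) :: -1 :: (List.replicate m (-2) ++ [-1]) := by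
  rw [List.rotate_eq_drop_append_take (by simp), uInt,
    List.drop_append, List.take_append]
  rw [List.drop_replicate, List.take_replicate, List.length_replicate]
  have h1 : m + 1 - m = 1 := by omega
  have h2 : m - (m + 1) = 0 := by omega
  have h3 : min (m + 1) m = m := by omega
  rw [h1, h2, h3]
  simp

lemma rotU_m2 (m : ℕ) : (uInt m).rotate (m + 2) = vInt m := by
  rw [List.rotate_eq_drop_append_take (by simp), uInt,
    List.drop_append, List.take_append]
  rw [List.drop_replicate, List.take_replicate, List.length_replicate]
  have h1 : m + 2 - m = 2 := by omega
  have h2 : m - (m + 2) = 0 := by omega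
  have h3 : min (m + 2) m = m := by omega
  rw [h1, h2, h3]
  simp [vInt]

lemma rotV_mid (m k : ℕ) (hk : k ≤ m) :
    (vInt m).rotate (k + 1)
      = List.replicate (m - k) (-2 : ℤ)
          ++ ([-1, -(m + 1 : ℤ), -1] ++ List.replicate k (-2)) := by
  rw [List.rotate_eq_drop_append_take (by simp; omega), vInt, List.drop_succ_cons,
    List.take_succ_cons, List.drop_append, List.take_append]
  rw [List.drop_replicate, List.take_replicate, List.length_replicate,
    Nat.sub_eq_zero_of_le hk, Nat.min_eq_left hk]
  simp

lemma rotV_m2 (m : ℕ) :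
    (vInt m).rotate (m + 2)
      = -(m + 1 : ℤ) :: -1 :: (List.replicate m (-2) ++ [-1]) := by
  have h : m + 2 = (m + 1) + 1 := rfl
  rw [h, List.rotate_eq_drop_append_take (by simp), vInt, List.drop_succ_cons,
    List.take_succ_cons, List.drop_append, List.take_append]
  rw [List.drop_replicate, List.take_replicate, List.length_replicate]
  have h1 : m + 1 - m = 1 := by omega
  have h2 : m - (m + 1) = 0 := by omega
  have h3 : min (m + 1) m = m := by omega
  rw [h1, h2, h3]
  simp

/-- Take of a long run plus something. -/
lemma take_run (p L : ℕ) (hL : L ≤ p) (rest : List ℤ) :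
    (List.replicate p (-2 : ℤ) ++ rest).take L = List.replicate L (-2 : ℤ) := by
  rw [List.take_append, List.take_replicate, List.length_replicate,
    Nat.min_eq_left hL, Nat.sub_eq_zero_of_le hL]
  simp

lemma take_run' (p L : ℕ) (hL : p ≤ L) (rest : List ℤ) :
    (List.replicate p (-2 : ℤ) ++ rest).take L
      = List.replicate p (-2 : ℤ) ++ rest.take (L - p) := by
  rw [List.take_append, List.take_replicate, List.length_replicate,
    Nat.min_eq_right hL]

/-- windows starting `[t, -1]` then a run, for `2 ≤ L ≤ m`. -/
lemma tail_window (m L : ℕ) (hL1 : 2 ≤ L) (hLm : L ≤ m) :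
    2 ≤ |cont ((-(m + 1 : ℤ) :: -1 :: (List.replicate m (-2) ++ [-1])).take L)| := by
  obtain ⟨k, rfl⟩ : ∃ k, L = k + 2 := ⟨L - 2, by omega⟩
  rw [show k + 2 = (k + 1) + 1 from rfl, List.take_succ_cons, List.take_succ_cons,
    take_run m k (by omega) _, cont_t_one_rep, abs_m1pow]
  have : (2 : ℤ) ≤ (m : ℤ) - k := by
    have : k + 2 ≤ m := hLm
    push_cast
    omega
  rw [abs_of_nonneg (by omega)]
  omega

lemma key_window (m : ℕ) (hm : 1 ≤ m) (j L : ℕ) (hL1 : 1 ≤ L) (hLm : L ≤ m) :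
    2 ≤ |cont (((uInt m).rotate j).take L)|
      ∨ 2 ≤ |cont (((vInt m).rotate j).take L)| := by
  have hmodu : (uInt m).rotate j = (uInt m).rotate (j % (m + 3)) := by
    conv_lhs => rw [← List.rotate_mod]
    rw [uInt_length]
  have hmodv : (vInt m).rotate j = (vInt m).rotate (j % (m + 3)) := by
    conv_lhs => rw [← List.rotate_mod]
    rw [vInt_length]
  rw [hmodu, hmodv]
  set j' := j % (m + 3) with hj'def
  have hj'lt : j' < m + 3 := Nat.mod_lt _ (by omega)
  rcases (by omega : j' ≤ m ∨ j' = m + 1 ∨ j' = m + 2) with hj | hj | hj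
  · -- main case
    set p := m - j' with hpdef
    rw [rotU_le m j' hj]
    rcases (by omega : L ≤ p ∨ L = p + 1 ∨ L = p + 2 ∨ p + 3 ≤ L) with hc | hc | hc | hc
    · -- pure run in u
      left
      rw [take_run p L hc, cont_rep_run, abs_m1pow, abs_of_nonneg (by positivity)]
      have : (1 : ℤ) ≤ (L : ℤ) := by exact_mod_cast hL1
      omega
    · -- u gives ±1 ; use v
      right
      have hj1 : 1 ≤ j' := by omega
      have hrot : (vInt m).rotate j'
          = List.replicate (m - (j' - 1)) (-2 : ℤ)
              ++ ([-1, -(m + 1 : ℤ), -1] ++ List.replicate (j' - 1) (-2)) := by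
        have h := rotV_mid m (j' - 1) (by omega)
        rwa [show j' - 1 + 1 = j' by omega] at h
      rw [hrot, take_run _ L (by omega), cont_rep_run, abs_m1pow,
        abs_of_nonneg (by positivity)]
      have : (1 : ℤ) ≤ (L : ℤ) := by exact_mod_cast hL1
      omega
    · -- u window = run ++ [-1, t]
      left
      rw [take_run' p L (by omega)]
      have h2 : L - p = 2 := by omega
      rw [h2]
      have htake : ([-1, -(m + 1 : ℤ), -1] ++ List.replicate j' (-2)).take 2
          = [-1, -(m + 1 : ℤ)] := by simp
      rw [htake, cont_rep_one_t, abs_m1pow]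
      have hj2 : 2 ≤ j' := by omega
      have : (2 : ℤ) ≤ (m : ℤ) - p := by
        have : p + 2 ≤ m := by omega
        push_cast
        omega
      rw [abs_of_nonneg (by omega)]
      omega
    · -- u window = run ++ S ++ run
      left
      rw [take_run' p L (by omega)]
      obtain ⟨q, hq⟩ : ∃ q, L - p = q + 3 := ⟨L - p - 3, by omega⟩
      have hqj : q ≤ j' := by omega
      have htake : ([-1, -(m + 1 : ℤ), -1] ++ List.replicate j' (-2)).take (q + 3)
          = [-1, -(m + 1 : ℤ), -1] ++ List.replicate q (-2) := by
        rw [show ([-1, -(m + 1 : ℤ), -1] ++ List.replicate j' (-2))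
            = -1 :: -(m + 1 : ℤ) :: -1 :: List.replicate j' (-2) by simp]
        rw [show q + 3 = ((q + 1) + 1) + 1 from rfl, List.take_succ_cons,
          List.take_succ_cons, List.take_succ_cons, List.take_replicate,
          Nat.min_eq_left hqj]
        simp
      rw [hq, htake, ← List.append_assoc, cont_full, abs_m1pow]
      have hbound : ((p : ℤ) + q + 1 - m) ≤ -2 := by
        have : p + q + 3 ≤ m := by omega
        push_cast
        omega
      rw [abs_of_nonpos (by omega)]
      omega
  · -- j' = m + 1
    left
    rw [hj, rotU_m1]
    rcases (by omega : L = 1 ∨ 2 ≤ L) with h1 | h2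
    · rw [h1]
      simp only [List.take_succ_cons, List.take_zero]
      rw [cont_singleton]
      rw [abs_of_nonpos (by push_cast; omega)]
      push_cast
      omega
    · exact tail_window m L h2 hLm
  · -- j' = m + 2
    right
    rw [hj, rotV_m2]
    rcases (by omega : L = 1 ∨ 2 ≤ L) with h1 | h2
    · rw [h1]
      simp only [List.take_succ_cons, List.take_zero]
      rw [cont_singleton]
      rw [abs_of_nonpos (by push_cast; omega)]
      push_cast
      omega
    · exact tail_window m L h2 hLm

end Key
section Assembly
variable {A : Type*} [CommRing A]

lemma oplus_length (a b : List A) (ha : 2 ≤ a.length) (hb : 2 ≤ b.length) :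
    (oplus a b).length = a.length + b.length - 2 := by
  simp only [oplus, List.length_cons, List.length_append, List.length_tail,
    List.length_dropLast]
  omega

lemma mProd_one_one_one : mProd [(1 : A), 1, 1] = -1 := by
  have : mProd [(1 : A), 1, 1] = mMat 1 * (mMat 1 * mMat 1) := by
    simp [mProd, Matrix.mul_assoc]
  rw [this, mMat, Matrix.mul_fin_two, Matrix.mul_fin_two]
  norm_num
  ext i j
  fin_cases i <;> fin_cases j <;> simp [Matrix.one_apply] <;> ring

lemma cont_middle (x y : A) (w : List A)
    (h : mProd (x :: (w ++ [y])) = 1 ∨ mProd (x :: (w ++ [y])) = -1) :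
    cont w = 1 ∨ cont w = -1 := by
  have hprod : mProd (x :: (w ++ [y])) = mMat y * mProd w * mMat x := by
    rw [mProd_cons, mProd_append, mProd_singleton]
  set iX : Matrix (Fin 2) (Fin 2) A := !![0, 1; -1, x] with hiX
  set iY : Matrix (Fin 2) (Fin 2) A := !![0, 1; -1, y] with hiY
  have hX : mMat x * iX = 1 := by
    rw [mMat, hiX, Matrix.mul_fin_two, Matrix.one_fin_two]
    norm_num
  have hY : iY * mMat y = 1 := by
    rw [mMat, hiY, Matrix.mul_fin_two, Matrix.one_fin_two]
    norm_num
  have hassoc : iY * (mMat y * mProd w * mMat x) * iX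
      = (iY * mMat y) * mProd w * (mMat x * iX) := by
    noncomm_ring
  have hsimp : iY * (mMat y * mProd w * mMat x) * iX = mProd w := by
    rw [hassoc, hX, hY, Matrix.one_mul, Matrix.mul_one]
  rcases h with he | he
  · rw [hprod] at he
    have hP : mProd w = iY * iX := by
      rw [← hsimp, he, Matrix.mul_one]
    right
    rw [cont_eq_mProd, hP, hiX, hiY, Matrix.mul_fin_two]
    norm_num
  · rw [hprod] at he
    have hP : mProd w = -(iY * iX) := by
      rw [← hsimp, he]
      rw [show iY * (-1 : Matrix (Fin 2) (Fin 2) A) * iX = -(iY * iX) by noncomm_ring]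
    left
    rw [cont_eq_mProd, hP, hiX, hiY, Matrix.mul_fin_two]
    norm_num

end Assembly

section PiRing
variable {I : Type*} (A : I → Type*) [∀ i, CommRing (A i)]

/-- Mixing a pair of integers into the product ring, second coordinate at `i₁`. -/
def mix [DecidableEq I] (i₁ : I) (p : ℤ × ℤ) : ∀ i, A i :=
  fun i => if i = i₁ then ((p.2 : ℤ) : A i) else ((p.1 : ℤ) : A i)

/-- The candidate irreducible λ-quiddity of length `m + 3` in the product ring. -/
def cList [DecidableEq I] (i₁ : I) (m : ℕ) : List (∀ i, A i) :=
  ((uInt m).zip (vInt m)).map (mix A i₁)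

variable [DecidableEq I] (i₁ : I) (m : ℕ)

lemma cList_length : (cList A i₁ m).length = m + 3 := by
  simp [cList, List.length_zip]

lemma cList_map_ne (i : I) (h : i ≠ i₁) :
    (cList A i₁ m).map (Pi.evalRingHom A i)
      = (uInt m).map (Int.castRingHom (A i)) := by
  rw [cList, List.map_map]
  have heq : (⇑(Pi.evalRingHom A i)) ∘ (mix A i₁)
      = (⇑(Int.castRingHom (A i))) ∘ Prod.fst := by
    funext p
    show mix A i₁ p i = _
    simp [mix, h]
  rw [heq, ← List.map_map, List.map_fst_zip (by simp)]

lemma cList_map_eq :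
    (cList A i₁ m).map (Pi.evalRingHom A i₁)
      = (vInt m).map (Int.castRingHom (A i₁)) := by
  rw [cList, List.map_map]
  have heq : (⇑(Pi.evalRingHom A i₁)) ∘ (mix A i₁)
      = (⇑(Int.castRingHom (A i₁))) ∘ Prod.snd := by
    funext p
    show mix A i₁ p i₁ = _
    simp [mix]
  rw [heq, ← List.map_map, List.map_snd_zip (by simp)]

lemma mprod_cList (k : I) :
    (mProd (cList A i₁ m)).map (Pi.evalRingHom A k)
      = ((Int.castRingHom (A k)).mapMatrix) ((-1 : ℤ) ^ m • 1) := by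
  by_cases hk : k = i₁
  · subst hk
    rw [← RingHom.mapMatrix_apply, ← mProd_map, cList_map_eq, mProd_map, mprod_vInt]
  · rw [← RingHom.mapMatrix_apply, ← mProd_map, cList_map_ne A i₁ m k hk, mProd_map,
      mprod_uInt]

lemma cList_quiddity :
    mProd (cList A i₁ m) = 1 ∨ mProd (cList A i₁ m) = -1 := by
  have key : ∀ (E : Matrix (Fin 2) (Fin 2) ℤ) (F : Matrix (Fin 2) (Fin 2) (∀ i, A i)),
      ((-1 : ℤ) ^ m • (1 : Matrix (Fin 2) (Fin 2) ℤ)) = E →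
      (∀ (k : I) (i j : Fin 2), (Int.castRingHom (A k)) (E i j) = F i j k) →
      mProd (cList A i₁ m) = F := by
    intro E F hE hF
    ext i j k
    have h := congrArg (fun M => M i j) (mprod_cList A i₁ m k)
    simp only [RingHom.mapMatrix_apply, Matrix.map_apply] at h
    rw [hE] at h
    have : (Pi.evalRingHom A k) (mProd (cList A i₁ m) i j) = F i j k := by
      rw [h, hF]
    exact this
  rcases Nat.even_or_odd m with hpar | hpar
  · left
    apply key 1
    · rw [hpar.neg_one_pow, one_smul]
    · intro k i j
      by_cases hij : i = j <;> simp [Matrix.one_apply, hij]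
  · right
    apply key (-1)
    · rw [hpar.neg_one_pow, neg_smul, one_smul]
    · intro k i j
      by_cases hij : i = j <;> simp [Matrix.one_apply, hij]

end PiRing
section Irred
variable {I : Type*} (A : I → Type*) [∀ i, CommRing (A i)] [DecidableEq I]

lemma cList_not_reducible (i₀ i₁ : I) (hne : i₀ ≠ i₁)
    [CharZero (A i₀)] [CharZero (A i₁)] (m : ℕ) (hm : 1 ≤ m) :
    ¬ IsReducible Set.univ (cList A i₁ m) := by
  rintro ⟨a, b, ha3, hb3, -, ⟨-, hbq⟩, hequiv⟩
  have hclen : (cList A i₁ m).length = m + 3 := cList_length A i₁ m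
  -- decompose b
  obtain ⟨x, xs, rfl⟩ : ∃ x xs, b = x :: xs := by
    cases b with
    | nil => simp at hb3
    | cons x xs => exact ⟨x, xs, rfl⟩
  have hxs : xs ≠ [] := by
    intro h
    rw [h] at hb3
    simp at hb3
  set w := xs.dropLast with hwdef
  set y := xs.getLast hxs with hydef
  have hbw : x :: xs = x :: (w ++ [y]) := by
    rw [hwdef, hydef, List.dropLast_append_getLast]
  have hcw : cont w = 1 ∨ cont w = -1 := by
    apply cont_middle x y w
    rw [← hbw]
    exact hbq
  -- length bookkeeping
  have hoplen : (oplus a (x :: xs)).length = a.length + (x :: xs).length - 2 :=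
    oplus_length a _ (by omega) (by omega)
  have hdrop : (oplus a (x :: xs)).drop a.length = w := by
    have h1 : (x :: xs).dropLast.tail = w := by
      rw [List.dropLast_cons_of_ne_nil hxs]
      simp [hwdef]
    rw [oplus, h1]
    have h2 : (a.headD 0 + (x :: xs).getLastD 0) ::
        (a.dropLast.tail ++ (a.getLastD 0 + (x :: xs).headD 0) :: w)
        = ((a.headD 0 + (x :: xs).getLastD 0) :: a.dropLast.tail
            ++ [a.getLastD 0 + (x :: xs).headD 0]) ++ w := by
      simp
    rw [h2, List.drop_left']
    simp only [List.length_cons, List.length_append, List.length_tail,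
      List.length_dropLast, List.length_nil]
    omega
  -- main contradiction machine
  have contra : ∀ j : ℕ,
      cont (((cList A i₁ m).rotate j).take (m + 3 - a.length)) = 1 ∨
      cont (((cList A i₁ m).rotate j).take (m + 3 - a.length)) = -1 →
      (oplus a (x :: xs)).length = m + 3 → False := by
    intro j hcv hlen
    set L := m + 3 - a.length with hLdef
    have hL1 : 1 ≤ L := by
      have : 3 ≤ (x :: xs).length := hb3
      simp only [List.length_cons] at this hlen
      omega
    have hLm : L ≤ m := by omega
    -- coordinate extraction
    have hcoord : ∀ (i : I), i ≠ i₁ →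
        (Pi.evalRingHom A i) (cont (((cList A i₁ m).rotate j).take L))
          = (Int.castRingHom (A i)) (cont (((uInt m).rotate j).take L)) := by
      intro i hi
      rw [← cont_map, ← cont_map]
      congr 1
      rw [List.map_take, List.map_take, List.map_rotate, List.map_rotate,
        cList_map_ne A i₁ m i hi]
    have hcoord1 :
        (Pi.evalRingHom A i₁) (cont (((cList A i₁ m).rotate j).take L))
          = (Int.castRingHom (A i₁)) (cont (((vInt m).rotate j).take L)) := by
      rw [← cont_map, ← cont_map]
      congr 1
      rw [List.map_take, List.map_take, List.map_rotate, List.map_rotate,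
        cList_map_eq A i₁ m]
    have hKuv := key_window m hm j L hL1 hLm
    rcases hcv with hcv | hcv
    · have hu : ((cont (((uInt m).rotate j).take L) : ℤ) : A i₀) = ((1 : ℤ) : A i₀) := by
        have := hcoord i₀ hne
        rw [hcv] at this
        simpa using this.symm
      have hv : ((cont (((vInt m).rotate j).take L) : ℤ) : A i₁) = ((1 : ℤ) : A i₁) := by
        have := hcoord1
        rw [hcv] at this
        simpa using this.symm
      have hu' := Int.cast_injective hu
      have hv' := Int.cast_injective hv
      rcases hKuv with h | h
      · rw [hu'] at h
        simp at h
      · rw [hv'] at h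
        simp at h
    · have hu : ((cont (((uInt m).rotate j).take L) : ℤ) : A i₀) = ((-1 : ℤ) : A i₀) := by
        have := hcoord i₀ hne
        rw [hcv] at this
        simpa using this.symm
      have hv : ((cont (((vInt m).rotate j).take L) : ℤ) : A i₁) = ((-1 : ℤ) : A i₁) := by
        have := hcoord1
        rw [hcv] at this
        simpa using this.symm
      have hu' := Int.cast_injective hu
      have hv' := Int.cast_injective hv
      rcases hKuv with h | h
      · rw [hu'] at h
        simp at h
      · rw [hv'] at h
        simp at h
  rcases hequiv with ⟨k, hk⟩ | ⟨k, hk⟩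
  · have hlen : (oplus a (x :: xs)).length = m + 3 := by
      rw [hk]
      simp [hclen]
    have hsum : a.length + (x :: xs).length - 2 = m + 3 := by
      rw [← hoplen, hlen]
    have halen : a.length ≤ m + 3 := by
      simp only [List.length_cons] at hsum hb3
      omega
    have hwin : w = ((cList A i₁ m).rotate (k + a.length)).take (m + 3 - a.length) := by
      rw [← hdrop, hk, rotdrop_eq_rotate_take _ _ _ (by rw [hclen]; exact halen), hclen]
    apply contra (k + a.length) _ hlen
    rw [← hwin]
    exact hcw
  · have hlen : (oplus a (x :: xs)).length = m + 3 := by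
      rw [hk]
      simp [hclen]
    have hsum : a.length + (x :: xs).length - 2 = m + 3 := by
      rw [← hoplen, hlen]
    have halen : a.length ≤ m + 3 := by
      simp only [List.length_cons] at hsum hb3
      omega
    have hwin : w
        = ((cList A i₁ m).reverse.rotate (k + a.length)).take (m + 3 - a.length) := by
      rw [← hdrop, hk,
        rotdrop_eq_rotate_take _ _ _ (by rw [List.length_reverse, hclen]; exact halen),
        List.length_reverse, hclen]
    obtain ⟨j', hj'⟩ := rev_window (cList A i₁ m) (k + a.length) (m + 3 - a.length)
      (by rw [hclen]; omega)
    apply contra j' _ hlen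
    have hcw2 : cont ((((cList A i₁ m).rotate j').take (m + 3 - a.length)).reverse) = 1
        ∨ cont ((((cList A i₁ m).rotate j').take (m + 3 - a.length)).reverse) = -1 := by
      rw [← hj', ← hwin]
      exact hcw
    rwa [cont_reverse] at hcw2

end Irred
/-- If at least two of the rings `A i` (for two distinct indices) have zero characteristic,
then for every `n ≥ 3` there is an irreducible λ-quiddity of size `n` over `∏ i, A i`. -/
theorem stmt9 {I : Type*} (A : I → Type*) [∀ i, CommRing (A i)]
    (i₀ i₁ : I) (hne : i₀ ≠ i₁)
    (h₀ : ringChar (A i₀) = 0) (h₁ : ringChar (A i₁) = 0)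
    (n : ℕ) (hn : 3 ≤ n) :
    ∃ c : List (∀ i, A i), IrreducibleQuiddity Set.univ c ∧ c.length = n := by
  haveI := Classical.decEq I
  haveI hc0 : CharP (A i₀) 0 := h₀ ▸ ringChar.charP (A i₀)
  haveI hz0 : CharZero (A i₀) := CharP.charP_to_charZero (A i₀)
  haveI hc1 : CharP (A i₁) 0 := h₁ ▸ ringChar.charP (A i₁)
  haveI hz1 : CharZero (A i₁) := CharP.charP_to_charZero (A i₁)
  rcases Nat.lt_or_ge n 4 with h4 | h4
  · -- n = 3
    have hn3 : n = 3 := by omega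
    subst hn3
    refine ⟨[(1 : ∀ i, A i), 1, 1], ⟨⟨fun x _ => Set.mem_univ x,
      Or.inr mProd_one_one_one⟩, by simp, ?_⟩, by simp⟩
    rintro ⟨a, b, ha3, hb3, -, -, hequiv⟩
    have hoplen := oplus_length a b (by omega) (by omega)
    rcases hequiv with ⟨k, hk⟩ | ⟨k, hk⟩ <;>
    · have hl := congrArg List.length hk
      rw [hoplen] at hl
      simp at hl
      omega
  · -- n ≥ 4
    have hm1 : 1 ≤ n - 3 := by omega
    refine ⟨cList A i₁ (n - 3), ⟨⟨fun x _ => Set.mem_univ x,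
      cList_quiddity A i₁ (n - 3)⟩, ?_, cList_not_reducible A i₀ i₁ hne (n - 3) hm1⟩, ?_⟩
    · rw [cList_length]
      omega
    · rw [cList_length]
      omega
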